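/- Fix d ≥ 1 and continuous maps M, N : ℝ → Matrix (Fin d) (Fin d) ℝ with M(t) and N(t) symmetric for every t, and let A, B : ℝ → Matrix (Fin d) (Fin d) ℂ be differentiable with A'(t) = i M(t) B(t) and B'(t) = i N(t) A(t) for all t. Then the matrix A(t)ᵀ B(t) − B(t)ᵀ A(t) is constant in t: A(t)ᵀ B(t) − B(t)ᵀ A(t) = A(0)ᵀ B(0) − B(0)ᵀ A(0) for all t ∈ ℝ. -/

import Mathlib

noncomputable section

open Matrix

/-- along the flow `A' = i M(t) B`, `B' = i N(t) A` with `M(t)`,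
`N(t)` real symmetric, the matrix `Aᵀ B - Bᵀ A` is constant in time. -/
theorem wronskian_transpose_invariant (d : ℕ) (hd : 1 ≤ d)
    (M N : ℝ → Matrix (Fin d) (Fin d) ℝ)
    (hMc : Continuous M) (hNc : Continuous N)
    (hMsym : ∀ t, (M t)ᵀ = M t) (hNsym : ∀ t, (N t)ᵀ = N t)
    (A B : ℝ → Matrix (Fin d) (Fin d) ℂ)
    (hA : ∀ t, ∀ i j, HasDerivAt (fun s => A s i j)
        ((Complex.I • ((M t).map (fun x => (x : ℂ)) * B t)) i j) t)
    (hB : ∀ t, ∀ i j, HasDerivAt (fun s => B s i j)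
        ((Complex.I • ((N t).map (fun x => (x : ℂ)) * A t)) i j) t) :
    ∀ t : ℝ, (A t)ᵀ * B t - (B t)ᵀ * A t = (A 0)ᵀ * B 0 - (B 0)ᵀ * A 0 := by
  have key : ∀ (i j : Fin d) (s : ℝ),
      HasDerivAt (fun u => ((A u)ᵀ * B u - (B u)ᵀ * A u) i j) 0 s := by
    intro i j s
    set Mc := (M s).map (fun x => (x : ℂ)) with hMc'
    set Nc := (N s).map (fun x => (x : ℂ)) with hNc'
    have hMs : Mcᵀ = Mc := by
      rw [hMc', ← Matrix.transpose_map, hMsym]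
    have hNs : Ncᵀ = Nc := by
      rw [hNc', ← Matrix.transpose_map, hNsym]
    have h1 : HasDerivAt (fun u => ((A u)ᵀ * B u) i j)
        (((Complex.I • (Mc * B s))ᵀ * B s + (A s)ᵀ * (Complex.I • (Nc * A s))) i j) s := by
      have h := HasDerivAt.fun_sum (fun k (_ : k ∈ Finset.univ) => (hA s k i).fun_mul (hB s k j))
      convert h using 1 <;> try rfl
      simp only [Matrix.add_apply, Matrix.mul_apply, Matrix.transpose_apply,
        Matrix.smul_apply, smul_eq_mul, ← Finset.sum_add_distrib]
      rfl
    have h2 : HasDerivAt (fun u => ((B u)ᵀ * A u) i j)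
        (((Complex.I • (Nc * A s))ᵀ * A s + (B s)ᵀ * (Complex.I • (Mc * B s))) i j) s := by
      have h := HasDerivAt.fun_sum (fun k (_ : k ∈ Finset.univ) => (hB s k i).fun_mul (hA s k j))
      convert h using 1 <;> try rfl
      simp only [Matrix.add_apply, Matrix.mul_apply, Matrix.transpose_apply,
        Matrix.smul_apply, smul_eq_mul, ← Finset.sum_add_distrib]
      rfl
    have h3 := h1.sub h2
    have hz : ((Complex.I • (Mc * B s))ᵀ * B s + (A s)ᵀ * (Complex.I • (Nc * A s))) i j
        - ((Complex.I • (Nc * A s))ᵀ * A s + (B s)ᵀ * (Complex.I • (Mc * B s))) i j = 0 := by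
      have : ((Complex.I • (Mc * B s))ᵀ * B s + (A s)ᵀ * (Complex.I • (Nc * A s)))
          - ((Complex.I • (Nc * A s))ᵀ * A s + (B s)ᵀ * (Complex.I • (Mc * B s))) = 0 := by
        simp only [Matrix.transpose_smul, Matrix.transpose_mul, hMs, hNs,
          Matrix.smul_mul, Matrix.mul_smul, Matrix.mul_assoc]
        abel
      have := congrFun (congrFun this i) j
      simpa [Matrix.sub_apply] using this
    have h4 : HasDerivAt (fun u => ((A u)ᵀ * B u) i j - ((B u)ᵀ * A u) i j) 0 s := by
      rw [← hz]; exact h3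
    exact h4
  intro t
  ext i j
  have hdiff : Differentiable ℝ (fun u => ((A u)ᵀ * B u - (B u)ᵀ * A u) i j) :=
    fun s => (key i j s).differentiableAt
  have hderiv : ∀ s, deriv (fun u => ((A u)ᵀ * B u - (B u)ᵀ * A u) i j) s = 0 :=
    fun s => (key i j s).deriv
  have := is_const_of_deriv_eq_zero hdiff hderiv t 0
  simpa [Matrix.sub_apply] using this
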